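/- Let A be a C*-algebra with ideals J ⊴ I ⊴ A. If (I/J) ⊗ K (tensor with the compact operators on a separable infinite-dimensional Hilbert space) is isomorphic to K(H) for some Hilbert space H, then I/J is itself isomorphic to K(H') for some Hilbert space H'. -/

import Mathlib

set_option maxHeartbeats 1000000

noncomputable section

/-- `C` is (isomorphic to) the algebra of compact operators on the Hilbert space `H`:
there is an injective `*`-homomorphism `C → B(H)` whose range is exactly the set of
compact operators. -/
def IsCompactsOn (H : Type) [NormedAddCommGroup H] [InnerProductSpace ℂ H]
    [CompleteSpace H] (C : Type*) [NonUnitalCStarAlgebra C] : Prop :=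
  ∃ φ : C →⋆ₙₐ[ℂ] (H →L[ℂ] H), Function.Injective φ ∧
    Set.range φ = {T : H →L[ℂ] H | IsCompactOperator T}

/-- A C*-algebra is elementary if it is isomorphic to `K(H)` for some Hilbert space. -/
def IsElementary (C : Type*) [NonUnitalCStarAlgebra C] : Prop :=
  ∃ (H : Type) (_ : NormedAddCommGroup H) (_ : InnerProductSpace ℂ H) (_ : CompleteSpace H),
    IsCompactsOn H C

/-- The C*-algebra `K` of compact operators on the separable infinite-dimensional Hilbert
space `ℓ²(ℕ)`. -/
def IsStdCompacts (K : Type*) [NonUnitalCStarAlgebra K] : Prop :=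
  IsCompactsOn (lp (fun _ : ℕ => ℂ) 2) K

/-- `T` is a C*-tensor product of `B` and `C`: there is a bilinear, multiplicative,
star-preserving pairing `B × C → T` which is injective on the algebraic tensor product
`B ⊗ C` and has dense span.  (When `C` is nuclear—e.g. the compact operators—this
determines `T` up to isomorphism as `B ⊗ C`.) -/
structure IsCStarTensor (B C T : Type*) [NonUnitalCStarAlgebra B] [NonUnitalCStarAlgebra C]
    [NonUnitalCStarAlgebra T] : Prop where
  exists_pairing :
    ∃ t : B →ₗ[ℂ] C →ₗ[ℂ] T,
      (∀ (b b' : B) (c c' : C), t b c * t b' c' = t (b * b') (c * c')) ∧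
      (∀ (b : B) (c : C), star (t b c) = t (star b) (star c)) ∧
      Function.Injective (TensorProduct.lift t) ∧
      DenseRange (TensorProduct.lift t)

end

section AuxiliaryLemmas

noncomputable section
open scoped InnerProductSpace ComplexConjugate

namespace ElemAux

variable {E : Type*} [NormedAddCommGroup E] [InnerProductSpace ℂ E]

/-- The rank-one operator `z ↦ ⟪y, z⟫ • x`. -/
def rankOne (x y : E) : E →L[ℂ] E :=
  (innerSL ℂ y).smulRight x

@[simp] lemma rankOne_apply (x y z : E) : rankOne x y z = ⟪y, z⟫_ℂ • x := rfl

lemma rankOne_compact (x y : E) : IsCompactOperator (rankOne x y) := by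
  have hg : IsCompactOperator (ContinuousLinearMap.smulRight (1 : ℂ →L[ℂ] ℂ) x) := by
    refine ⟨(ContinuousLinearMap.smulRight (1 : ℂ →L[ℂ] ℂ) x) '' Metric.closedBall 0 1,
      (isCompact_closedBall 0 1).image (ContinuousLinearMap.smulRight (1 : ℂ →L[ℂ] ℂ) x).continuous, ?_⟩
    exact Filter.mem_of_superset (Metric.closedBall_mem_nhds 0 one_pos)
      fun z hz => Set.mem_preimage.mpr ⟨z, hz, rfl⟩
  have := hg.comp_clm (innerSL ℂ y)
  convert this using 1 <;> rfl

lemma rankOne_adjoint [CompleteSpace E] (x y : E) :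
    ContinuousLinearMap.adjoint (rankOne x y) = rankOne y x := by
  refine ((ContinuousLinearMap.eq_adjoint_iff (𝕜 := ℂ) (rankOne y x) (rankOne x y)).mpr ?_).symm
  intro a b
  simp [inner_smul_left, inner_smul_right, mul_comm]

lemma rankOne_norm_le (x y : E) : ‖rankOne x y‖ ≤ ‖y‖ * ‖x‖ := by
  refine ContinuousLinearMap.opNorm_le_bound _ (by positivity) fun z => ?_
  rw [rankOne_apply, norm_smul]
  calc ‖⟪y, z⟫_ℂ‖ * ‖x‖ ≤ ‖y‖ * ‖z‖ * ‖x‖ := by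
        gcongr; exact norm_inner_le_norm y z
    _ = ‖y‖ * ‖x‖ * ‖z‖ := by ring

lemma continuous_rankOne_left (y : E) : Continuous fun x : E => rankOne x y := by
  refine (LipschitzWith.of_dist_le_mul (K := ‖y‖₊) fun x x' => ?_).continuous
  rw [dist_eq_norm, dist_eq_norm]
  have : rankOne x y - rankOne x' y = rankOne (x - x') y := by
    ext z; simp [smul_sub]
  rw [this]
  simpa using rankOne_norm_le (x - x') y

variable (V : Submodule ℂ E)

/-- Restriction of a continuous endomorphism to an invariant submodule. -/
def restrictCLM (A : E →L[ℂ] E) (h : ∀ x : V, A x ∈ V) : V →L[ℂ] V :=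
  (A.comp V.subtypeL).codRestrict V h

@[simp] lemma restrictCLM_apply (A : E →L[ℂ] E) (h : ∀ x : V, A x ∈ V) (x : V) :
    (restrictCLM V A h x : E) = A x := rfl

lemma restrictCLM_adjoint [CompleteSpace E] (hV : IsClosed (V : Set E)) (A : E →L[ℂ] E)
    (hA : ∀ x : V, A x ∈ V) (hA' : ∀ x : V, ContinuousLinearMap.adjoint A x ∈ V) :
    haveI : CompleteSpace V := hV.completeSpace_coe
    restrictCLM V (ContinuousLinearMap.adjoint A) hA' =
      ContinuousLinearMap.adjoint (restrictCLM V A hA) := by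
  haveI : CompleteSpace V := hV.completeSpace_coe
  refine (ContinuousLinearMap.eq_adjoint_iff _ _).mpr fun x y => ?_
  rw [Submodule.coe_inner, Submodule.coe_inner]
  simp only [restrictCLM_apply]
  exact ContinuousLinearMap.adjoint_inner_left A (y : E) (x : E)

lemma restrictCLM_compact (A : E →L[ℂ] E) (hA : ∀ x : V, A x ∈ V) (hV : IsClosed (V : Set E))
    (hc : IsCompactOperator A) : IsCompactOperator (restrictCLM V A hA) :=
  (hc.comp_clm V.subtypeL).codRestrict hA hV

/-- Any closed subspace of `B(E)` containing all rank-one operators contains every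
compact operator. -/
lemma compact_mem_of_rankOne_mem [CompleteSpace E] (N : Submodule ℂ (E →L[ℂ] E))
    (hNc : IsClosed (N : Set (E →L[ℂ] E))) (hrank : ∀ x y : E, rankOne x y ∈ N)
    (S : E →L[ℂ] E) (hS : IsCompactOperator S) : S ∈ N := by
  have hcl : S ∈ closure (N : Set (E →L[ℂ] E)) := by
    rw [Metric.mem_closure_iff]
    intro ε hε
    obtain ⟨C, hC, himg⟩ := hS.image_closedBall_subset_compact 1
    have htb : TotallyBounded (S '' Metric.closedBall 0 1) :=
      (hC.totallyBounded).subset himg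
    obtain ⟨t, htfin, hcov⟩ := (Metric.totallyBounded_iff.mp htb) (ε / 4) (by positivity)
    set F : Submodule ℂ E := Submodule.span ℂ t with hF
    haveI : FiniteDimensional ℂ F := FiniteDimensional.span_of_finite ℂ htfin
    haveI : CompleteSpace F := FiniteDimensional.complete ℂ F
    set b := stdOrthonormalBasis ℂ F
    set P : E →L[ℂ] E := F.subtypeL.comp (F.orthogonalProjectionOnto) with hP
    set A : E →L[ℂ] E := P.comp S with hA
    have hAN : A ∈ N := by
      have : A = ∑ i, rankOne ((b i : E)) (ContinuousLinearMap.adjoint S (b i)) := by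
        ext z
        have h1 : F.orthogonalProjectionOnto (S z) = ∑ i, ⟪(b i : E), S z⟫_ℂ • b i :=
          b.orthogonalProjectionOnto_apply_eq_sum (S z)
        have : A z = ((∑ i, ⟪(b i : E), S z⟫_ℂ • b i : F) : E) := by
          rw [hA]; simp only [ContinuousLinearMap.comp_apply]
          rw [hP]; simp only [ContinuousLinearMap.comp_apply, Submodule.subtypeL_apply]
          rw [h1]
        rw [this]
        push_cast
        rw [Finset.sum_apply]
        refine Finset.sum_congr rfl fun i _ => ?_
        rw [rankOne_apply, ContinuousLinearMap.adjoint_inner_left]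
      rw [this]
      exact Submodule.sum_mem N fun i _ => hrank _ _
    refine ⟨A, hAN, ?_⟩
    have hdiff : ∀ z : E, ‖S z - A z‖ ≤ (ε / 4) * ‖z‖ := by
      intro z
      rcases eq_or_ne z 0 with rfl | hz
      · simp
      · have hnz : (0 : ℝ) < ‖z‖ := norm_pos_iff.mpr hz
        set u : E := ‖z‖⁻¹ • z with hu
        have hun : ‖u‖ = 1 := by
          rw [hu, norm_smul]; simp [hnz.ne']
        have humem : S u ∈ S '' Metric.closedBall 0 1 := ⟨u, by simp [hun], rfl⟩
        obtain ⟨y, hyt, hyd⟩ := Set.mem_iUnion₂.mp (hcov humem)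
        have hyF : y ∈ F := Submodule.subset_span hyt
        have hmin : ‖S u - P (S u)‖ ≤ ‖S u - y‖ := by
          have h1 : ‖S u - (F.orthogonalProjectionOnto (S u) : E)‖ = ⨅ x : F, ‖S u - x‖ :=
            Submodule.starProjection_minimal (S u)
          have h2 : P (S u) = (F.orthogonalProjectionOnto (S u) : E) := rfl
          rw [h2, h1]
          exact ciInf_le ⟨0, fun r ⟨x, hx⟩ => hx ▸ norm_nonneg _⟩ (⟨y, hyF⟩ : F)
        have hyd' : ‖S u - y‖ ≤ ε / 4 := by
          have := Metric.mem_ball.mp hyd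
          rw [dist_eq_norm] at this
          linarith
        have hSu : ‖S u - A u‖ ≤ ε / 4 := le_trans hmin hyd'
        have hscale : S z - A z = ‖z‖ • (S u - A u) := by
          rw [hu]
          simp only [map_smul, smul_sub, smul_smul]
          norm_num [hnz.ne']
        rw [hscale, norm_smul]
        simp only [norm_norm]
        calc ‖z‖ * ‖S u - A u‖ ≤ ‖z‖ * (ε / 4) := by gcongr
          _ = ε / 4 * ‖z‖ := by ring
    have hnorm : ‖S - A‖ ≤ ε / 4 := by
      refine ContinuousLinearMap.opNorm_le_bound _ (by positivity) fun z => ?_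
      simpa using hdiff z
    rw [dist_eq_norm]
    calc ‖S - A‖ ≤ ε / 4 := hnorm
      _ < ε := by linarith
  rwa [hNc.closure_eq] at hcl

/-- In a vector space tensor product over `ℂ` of normed spaces, `q ⊗ c = 0` with `c ≠ 0`
forces `q = 0`. -/
lemma eq_zero_of_tmul_eq_zero {Q K : Type*} [NormedAddCommGroup Q] [NormedAddCommGroup K]
    [NormedSpace ℂ Q] [NormedSpace ℂ K] {q : Q} {c : K}
    (h : (q ⊗ₜ[ℂ] c : TensorProduct ℂ Q K) = 0) (hc : c ≠ 0) : q = 0 := by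
  obtain ⟨g, -, hg⟩ := exists_dual_vector ℂ c (norm_ne_zero_iff.mpr hc)
  let bil : Q →ₗ[ℂ] K →ₗ[ℂ] Q :=
    { toFun := fun q' => (g.toLinearMap).smulRight q'
      map_add' := by intro a b; ext k; simp [smul_add]
      map_smul' := by
        intro a b; ext k
        simp only [LinearMap.smulRight_apply, RingHom.id_apply, LinearMap.smul_apply]
        rw [smul_comm] }
  have := congrArg (TensorProduct.lift bil) h
  rw [TensorProduct.lift.tmul, map_zero] at this
  simp only [bil, LinearMap.coe_mk, AddHom.coe_mk, LinearMap.smulRight_apply,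
    ContinuousLinearMap.coe_coe, hg] at this
  have hcn : (‖c‖ : ℂ) ≠ 0 := by
    simpa using norm_ne_zero_iff.mpr hc
  exact (smul_eq_zero.mp this).resolve_left hcn

end ElemAux

end
end AuxiliaryLemmas

open scoped InnerProductSpace ComplexConjugate

open ElemAux in
/-- let `A` be a C*-algebra with closed two-sided ideals `J ⊴ I ⊴ A`, and
let `Q` be a C*-algebra realizing the quotient `I/J` (a surjective `*`-homomorphism
`I → Q` with kernel `J`).  If `(I/J) ⊗ K` is elementary (where `K` is the compacts on a
separable infinite-dimensional Hilbert space), then `I/J` is itself elementary. -/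
theorem elementary_of_tensor_compacts_elementary
    {A : Type*} [NonUnitalCStarAlgebra A]
    (I J : NonUnitalStarSubalgebra ℂ A)
    [IsClosed (I : Set A)] [IsClosed (J : Set A)]
    (hI : ∀ a : A, ∀ x ∈ I, a * x ∈ I ∧ x * a ∈ I)
    (hJ : ∀ a : A, ∀ x ∈ J, a * x ∈ J ∧ x * a ∈ J)
    (hJI : J ≤ I)
    {Q : Type*} [NonUnitalCStarAlgebra Q]
    (π : I →⋆ₙₐ[ℂ] Q) (hπ : Function.Surjective π)
    (hker : ∀ x : I, π x = 0 ↔ (x : A) ∈ J)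
    {K : Type*} [NonUnitalCStarAlgebra K] (hK : IsStdCompacts K)
    {T : Type*} [NonUnitalCStarAlgebra T] (hT : IsCStarTensor Q K T)
    (hTel : IsElementary T) :
    IsElementary Q := by
  classical
  obtain ⟨t, hmul, hstar, hinj, hdense⟩ := hT.exists_pairing
  unfold IsStdCompacts IsCompactsOn at hK
  obtain ⟨φK, hφKinj, hφKrange⟩ := hK
  unfold IsElementary IsCompactsOn at hTel
  obtain ⟨H, iH1, iH2, iH3, ψ, hψinj, hψrange⟩ := hTel
  -- ### Step 1: a rank-one projection `c` in `K`
  have hsne : (lp.single 2 (0 : ℕ) (1:ℂ) : lp (fun _ : ℕ => ℂ) 2) ≠ 0 := by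
    intro h
    have h0 : (lp.single 2 (0 : ℕ) (1:ℂ) : lp (fun _ : ℕ => ℂ) 2) 0 = (0 : ℂ) := by rw [h]; rfl
    rw [lp.single_apply_self] at h0
    exact one_ne_zero h0
  set e₀ : lp (fun _ : ℕ => ℂ) 2 :=
    ‖(lp.single 2 (0 : ℕ) (1:ℂ) : lp (fun _ : ℕ => ℂ) 2)‖⁻¹ • lp.single 2 (0 : ℕ) (1:ℂ) with he₀
  have he₀n : ‖e₀‖ = 1 := by
    rw [he₀, norm_smul]
    simp [norm_ne_zero_iff.mpr hsne]
  have he₀i : ⟪e₀, e₀⟫_ℂ = 1 := by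
    rw [@inner_self_eq_norm_sq_to_K ℂ, he₀n]
    norm_num
  have he₀ne : e₀ ≠ 0 := by
    intro h
    rw [h, norm_zero] at he₀n
    norm_num at he₀n
  obtain ⟨c, hc⟩ : ∃ c : K, φK c = rankOne e₀ e₀ := by
    have : rankOne e₀ e₀ ∈ Set.range φK := by
      rw [hφKrange]; exact rankOne_compact e₀ e₀
    exact this
  have hc2 : c * c = c := by
    apply hφKinj
    rw [map_mul, hc]
    ext z
    simp [ContinuousLinearMap.mul_apply, inner_smul_right, he₀i, he₀n]
  have hcstar : star c = c := by
    apply hφKinj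
    rw [map_star, hc, ContinuousLinearMap.star_eq_adjoint, rankOne_adjoint]
  have hcne : c ≠ 0 := by
    intro h
    have : rankOne e₀ e₀ = 0 := by rw [← hc, h, map_zero]
    have he := congrArg (fun (B : lp (fun _ : ℕ => ℂ) 2 →L[ℂ] lp (fun _ : ℕ => ℂ) 2) => B e₀) this
    simp only [rankOne_apply, he₀i, one_smul, ContinuousLinearMap.zero_apply] at he
    exact he₀ne he
  have hckc : ∀ k : K, c * k * c = ⟪e₀, φK k e₀⟫_ℂ • c := by
    intro k
    apply hφKinj
    rw [map_mul, map_mul, map_smul, hc]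
    refine ContinuousLinearMap.ext fun z => ?_
    simp only [ContinuousLinearMap.mul_apply, rankOne_apply, ContinuousLinearMap.smul_apply,
      map_smul, inner_smul_right, smul_smul]
    rw [mul_comm]
  -- ### Step 2: the embedding `ι : Q → T`, `q ↦ t q c`
  let ι : Q →⋆ₙₐ[ℂ] T :=
    { toFun := fun q => t q c
      map_add' := by intro a b; simp
      map_smul' := by intro m a; simp
      map_zero' := by simp
      map_mul' := by intro a b; rw [hmul, hc2]
      map_star' := by intro a; rw [hstar, hcstar] }
  have hιapp : ∀ q : Q, ι q = t q c := fun _ => rfl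
  have hιinj : Function.Injective ι := by
    have hker : ∀ q : Q, ι q = 0 → q = 0 := by
      intro q hq
      have h1 : TensorProduct.lift t (q ⊗ₜ[ℂ] c) = 0 := by
        rw [TensorProduct.lift.tmul]; exact hq
      have h2 : (q ⊗ₜ[ℂ] c : TensorProduct ℂ Q K) = 0 := by
        apply hinj; rw [h1, map_zero]
      exact eq_zero_of_tmul_eq_zero h2 hcne
    intro a b hab
    have : ι (a - b) = 0 := by rw [map_sub, hab, sub_self]
    have := hker _ this
    exact sub_eq_zero.mp this
  -- ### Step 3: the embedding `j : Q → B(H)`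
  let j : Q →⋆ₙₐ[ℂ] (H →L[ℂ] H) := ψ.comp ι
  have hjapp : ∀ q : Q, j q = ψ (ι q) := fun _ => rfl
  have hjinj : Function.Injective j := fun a b h => hιinj (hψinj h)
  have hjcompact : ∀ q : Q, IsCompactOperator (j q) := by
    intro q
    have : j q ∈ Set.range ψ := ⟨ι q, rfl⟩
    rw [hψrange] at this
    exact this
  -- ### Step 4: the range of `ι` is hereditary enough
  have hιcl : IsClosed (Set.range ι) :=
    ((NonUnitalStarAlgHom.isometry ι hιinj).isClosedEmbedding).isClosed_range
  have hher : ∀ (a : T) (r s : Q), ι r * a * ι s ∈ Set.range ι := by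
    intro a r s
    have hD : ∀ z : TensorProduct ℂ Q K,
        ι r * TensorProduct.lift t z * ι s ∈ Set.range ι := by
      intro z
      induction z using TensorProduct.induction_on with
      | zero => exact ⟨0, by simp⟩
      | tmul q k =>
          refine ⟨(⟪e₀, φK k e₀⟫_ℂ) • (r * q * s), ?_⟩
          rw [TensorProduct.lift.tmul]
          show t _ c = t r c * t q k * t s c
          rw [hmul r q c k, hmul (r * q) s (c * k) c, hckc k]
          rw [map_smul t, LinearMap.smul_apply, (t (r * q * s)).map_smul]
      | add x y hx hy =>
          obtain ⟨qx, hqx⟩ := hx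
          obtain ⟨qy, hqy⟩ := hy
          refine ⟨qx + qy, ?_⟩
          rw [map_add, map_add, hqx, hqy, mul_add, add_mul]
    have ha : a ∈ closure (Set.range (TensorProduct.lift t)) := hdense a
    have hcont : Continuous fun x : T => ι r * x * ι s :=
      (continuous_const.mul continuous_id).mul continuous_const
    have h1 : (fun x : T => ι r * x * ι s) a ∈
        (fun x : T => ι r * x * ι s) '' closure (Set.range (TensorProduct.lift t)) :=
      ⟨a, ha, rfl⟩
    have h2 := image_closure_subset_closure_image hcont h1
    have h3 : (fun x : T => ι r * x * ι s) '' Set.range (TensorProduct.lift t) ⊆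
        Set.range ι := by
      rintro _ ⟨z, ⟨w, rfl⟩, rfl⟩
      exact hD w
    exact hιcl.closure_eq ▸ (closure_mono h3) h2
  -- ### Step 5: the essential subspace `H'`
  let G : Set H := ⋃ q : Q, Set.range (j q)
  let H' : Submodule ℂ H := (Submodule.span ℂ G).topologicalClosure
  have hH'c : IsClosed (H' : Set H) := Submodule.isClosed_topologicalClosure _
  haveI : CompleteSpace H' := hH'c.completeSpace_coe
  have hGH' : ∀ (q : Q) (ξ : H), j q ξ ∈ H' := fun q ξ =>
    Submodule.le_topologicalClosure _
      (Submodule.subset_span (Set.mem_iUnion.mpr ⟨q, ⟨ξ, rfl⟩⟩))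
  have hinv : ∀ q : Q, ∀ x : H', j q (x : H) ∈ H' := fun q x => hGH' q x
  -- ### Step 6: the range of `j` as a closed submodule of `B(H)`
  let jl : Q →ₗ[ℂ] (H →L[ℂ] H) :=
    { toFun := j
      map_add' := fun a b => map_add j a b
      map_smul' := fun m a => map_smul j m a }
  let N : Submodule ℂ (H →L[ℂ] H) := LinearMap.range jl
  have hNmem : ∀ B : H →L[ℂ] H, B ∈ N ↔ ∃ q : Q, j q = B := by
    intro B
    constructor
    · rintro ⟨q, rfl⟩; exact ⟨q, rfl⟩
    · rintro ⟨q, rfl⟩; exact ⟨q, rfl⟩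
  have hNc : IsClosed (N : Set (H →L[ℂ] H)) := by
    have : (N : Set (H →L[ℂ] H)) = Set.range j := by
      ext B
      simp only [SetLike.mem_coe, hNmem]
      exact ⟨fun ⟨q, h⟩ => ⟨q, h⟩, fun ⟨q, h⟩ => ⟨q, h⟩⟩
    rw [this]
    exact ((NonUnitalStarAlgHom.isometry j hjinj).isClosedEmbedding).isClosed_range
  have hNstar : ∀ B ∈ N, ContinuousLinearMap.adjoint B ∈ N := by
    intro B hB
    obtain ⟨q, hq⟩ := (hNmem B).mp hB
    refine (hNmem _).mpr ⟨star q, ?_⟩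
    rw [map_star, hq, ContinuousLinearMap.star_eq_adjoint]
  -- Step 6a : rank-one operators built from vectors in the range of `j` lie in `N`
  have h6a : ∀ (r s : Q) (ξ η : H), rankOne (j r ξ) (j s η) ∈ N := by
    intro r s ξ η
    obtain ⟨a, ha⟩ : ∃ a : T, ψ a = rankOne ξ η := by
      have : rankOne ξ η ∈ Set.range ψ := by
        rw [hψrange]; exact rankOne_compact ξ η
      exact this
    obtain ⟨q₀, hq₀⟩ := hher a r (star s)
    refine (hNmem _).mpr ⟨q₀, ?_⟩
    have h1 : j q₀ = j r * ψ a * j (star s) := by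
      rw [hjapp, hq₀, map_mul, map_mul, hjapp, hjapp]
    rw [h1, ha]
    refine ContinuousLinearMap.ext fun z => ?_
    simp only [ContinuousLinearMap.mul_apply, rankOne_apply, map_smul]
    have h2 : j (star s) = ContinuousLinearMap.adjoint (j s) := by
      rw [map_star, ContinuousLinearMap.star_eq_adjoint]
    rw [h2, ContinuousLinearMap.adjoint_inner_right]
  -- Step 6b : rank-one operators built from vectors of `H'` lie in `N`
  have key : ∀ y : H, (∀ (r : Q) (ξ : H), rankOne (j r ξ) y ∈ N) →
      ∀ x ∈ H', rankOne x y ∈ N := by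
    intro y hy x hx
    let M : Submodule ℂ H :=
      { carrier := {x : H | rankOne x y ∈ N}
        add_mem' := by
          intro a b ha hb
          have h : rankOne (a + b) y = rankOne a y + rankOne b y := by
            ext z; simp [smul_add]
          show rankOne (a + b) y ∈ N
          rw [h]; exact N.add_mem ha hb
        zero_mem' := by
          have h : rankOne (0 : H) y = 0 := by ext z; simp
          show rankOne (0 : H) y ∈ N
          rw [h]; exact N.zero_mem
        smul_mem' := by
          intro m a ha
          have h : rankOne (m • a) y = m • rankOne a y := by
            ext z; rw [rankOne_apply, ContinuousLinearMap.smul_apply, rankOne_apply,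
              smul_smul, smul_smul, mul_comm]
          show rankOne (m • a) y ∈ N
          rw [h]; exact N.smul_mem m ha }
    have hMc : IsClosed (M : Set H) := hNc.preimage (continuous_rankOne_left y)
    have hle : H' ≤ M := by
      refine Submodule.topologicalClosure_minimal _ (Submodule.span_le.mpr ?_) hMc
      rintro x ⟨Sq, ⟨q, rfl⟩, ⟨ξ, rfl⟩⟩
      exact hy q ξ
    exact hle hx
  have h6b : ∀ x ∈ H', ∀ y ∈ H', rankOne (x : H) y ∈ N := by
    intro x hx y hy
    have step1 : ∀ (s : Q) (η : H), rankOne x (j s η) ∈ N := by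
      intro s η
      exact key (j s η) (fun r ξ => h6a r s ξ η) x hx
    have step2 : ∀ (r : Q) (ξ : H), rankOne (j r ξ) x ∈ N := by
      intro r ξ
      have h := hNstar _ (step1 r ξ)
      rwa [rankOne_adjoint] at h
    have step3 : rankOne y x ∈ N := key x step2 y hy
    have h := hNstar _ step3
    rwa [rankOne_adjoint] at h
  -- ### Step 7: the restriction homomorphism `ρ : Q → B(H')`
  let ρ₀ : Q → (H' →L[ℂ] H') := fun q => restrictCLM H' (j q) (hinv q)
  have hρ₀app : ∀ (q : Q) (x : H'), (ρ₀ q x : H) = j q (x : H) := fun q x => rfl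
  let ρ : Q →⋆ₙₐ[ℂ] (H' →L[ℂ] H') :=
    { toFun := ρ₀
      map_add' := by
        intro a b
        refine ContinuousLinearMap.ext fun x => Subtype.ext ?_
        push_cast [hρ₀app]
        rw [map_add]
        rfl
      map_smul' := by
        intro m a
        refine ContinuousLinearMap.ext fun x => Subtype.ext ?_
        push_cast [hρ₀app]
        rw [map_smul]
        rfl
      map_zero' := by
        refine ContinuousLinearMap.ext fun x => Subtype.ext ?_
        push_cast [hρ₀app]
        rw [map_zero]
        rfl
      map_mul' := by
        intro a b
        refine ContinuousLinearMap.ext fun x => Subtype.ext ?_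
        push_cast [hρ₀app]
        rw [map_mul]
        rfl
      map_star' := by
        intro q
        show ρ₀ (star q) = star (ρ₀ q)
        rw [ContinuousLinearMap.star_eq_adjoint]
        refine (ContinuousLinearMap.eq_adjoint_iff _ _).mpr fun x y => ?_
        rw [Submodule.coe_inner, Submodule.coe_inner, hρ₀app, hρ₀app]
        have h2 : j (star q) = ContinuousLinearMap.adjoint (j q) := by
          rw [map_star, ContinuousLinearMap.star_eq_adjoint]
        rw [h2]
        exact ContinuousLinearMap.adjoint_inner_left (j q) (y : H) (x : H) }
  have hρapp : ∀ (q : Q) (x : H'), (ρ q x : H) = j q (x : H) := fun q x => rfl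
  -- injectivity of ρ
  have hρker : ∀ q : Q, ρ q = 0 → q = 0 := by
    intro q hq
    have hq0 : ∀ x : H', j q (x : H) = 0 := by
      intro x
      have h1 : ρ q x = 0 := by rw [hq]; rfl
      have h2 := congrArg (Subtype.val) h1
      rwa [hρapp] at h2
    have hjq : j (q * star q) = 0 := by
      refine ContinuousLinearMap.ext fun ξ => ?_
      rw [map_mul, ContinuousLinearMap.mul_apply]
      have := hq0 ⟨j (star q) ξ, hGH' (star q) ξ⟩
      simpa using this
    have : q * star q = 0 := hjinj (by rw [hjq, map_zero])
    exact (CStarRing.mul_star_self_eq_zero_iff q).mp this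
  have hρinj : Function.Injective ρ := by
    intro a b hab
    have : ρ (a - b) = 0 := by rw [map_sub, hab, sub_self]
    exact sub_eq_zero.mp (hρker _ this)
  -- range of ρ is exactly the compact operators on H'
  refine ⟨H', inferInstance, inferInstance, inferInstance, ρ, hρinj, ?_⟩
  apply Set.eq_of_subset_of_subset
  · rintro _ ⟨q, rfl⟩
    exact restrictCLM_compact H' (j q) (hinv q) hH'c (hjcompact q)
  · intro S hS
    let ρl : Q →ₗ[ℂ] (H' →L[ℂ] H') :=
      { toFun := ρ
        map_add' := fun a b => map_add ρ a b
        map_smul' := fun m a => map_smul ρ m a }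
    let Nρ : Submodule ℂ (H' →L[ℂ] H') := LinearMap.range ρl
    have hNρc : IsClosed (Nρ : Set (H' →L[ℂ] H')) := by
      have : (Nρ : Set (H' →L[ℂ] H')) = Set.range ρ := by
        ext B
        constructor
        · rintro ⟨q, rfl⟩; exact ⟨q, rfl⟩
        · rintro ⟨q, rfl⟩; exact ⟨q, rfl⟩
      rw [this]
      exact ((NonUnitalStarAlgHom.isometry ρ hρinj).isClosedEmbedding).isClosed_range
    have hrank : ∀ x y : H', rankOne x y ∈ Nρ := by
      intro x y
      obtain ⟨q, hq⟩ := (hNmem _).mp (h6b (x : H) x.2 (y : H) y.2)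
      refine ⟨q, ?_⟩
      refine ContinuousLinearMap.ext fun z => Subtype.ext ?_
      show (ρ q z : H) = _
      rw [hρapp, hq, rankOne_apply]
      rfl
    have hmem : S ∈ Nρ := compact_mem_of_rankOne_mem Nρ hNρc hrank S hS
    obtain ⟨q, hq⟩ := hmem
    exact ⟨q, hq⟩
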